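/- Let L be a linear subspace of ℝⁿ with orthogonal projection Π_L, and let B be a symmetric n×n matrix with I + B positive definite. Then Π_L (I + Π_L B Π_L)^{-1} Π_L ⪯ (I + B)^{-1}. -/

import Mathlib

open Matrix

/-- for the orthogonal projection `P` onto a linear subspace `L` and a symmetric
matrix `B` with `I + B ≻ 0`, we have `P (I + P B P)⁻¹ P ⪯ (I + B)⁻¹`. -/
theorem stmt_3 {n : ℕ} (L : Submodule ℝ (Fin n → ℝ)) (P B : Matrix (Fin n) (Fin n) ℝ)
    (hPsymm : P.IsSymm) (hPidem : P * P = P) (hPrange : LinearMap.range P.mulVecLin = L)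
    (hBsymm : B.IsSymm) (hpd : ((1 : Matrix (Fin n) (Fin n) ℝ) + B).PosDef) :
    (((1 : Matrix (Fin n) (Fin n) ℝ) + B)⁻¹
      - P * ((1 : Matrix (Fin n) (Fin n) ℝ) + P * B * P)⁻¹ * P).PosSemidef := by
  classical
  set A : Matrix (Fin n) (Fin n) ℝ := 1 + B with hAdef
  set M : Matrix (Fin n) (Fin n) ℝ := 1 + P * B * P with hMdef
  have hct : ∀ X : Matrix (Fin n) (Fin n) ℝ, Xᴴ = Xᵀ := fun X => by
    ext i j; simp [Matrix.conjTranspose_apply]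
  have hPt : Pᵀ = P := hPsymm
  have hBt : Bᵀ = B := hBsymm
  have hAt : Aᵀ = A := by rw [hAdef, transpose_add, transpose_one, hBt]
  have hMt : Mᵀ = M := by
    rw [hMdef, transpose_add, transpose_one, transpose_mul, transpose_mul, hPt, hBt,
      Matrix.mul_assoc]
  -- 1 - P is symmetric and idempotent
  have h1Pt : ((1 : Matrix (Fin n) (Fin n) ℝ) - P)ᵀ = 1 - P := by
    rw [transpose_sub, transpose_one, hPt]
  have h1Pidem : ((1 : Matrix (Fin n) (Fin n) ℝ) - P) * (1 - P) = 1 - P := by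
    rw [Matrix.mul_sub, Matrix.mul_one, Matrix.sub_mul, Matrix.one_mul, hPidem]
    abel
  have h1P_psd : ((1 : Matrix (Fin n) (Fin n) ℝ) - P).PosSemidef := by
    have : ((1 : Matrix (Fin n) (Fin n) ℝ) - P) = (1 - P)ᴴ * (1 - P) := by
      rw [hct, h1Pt, h1Pidem]
    rw [this]
    exact Matrix.posSemidef_conjTranspose_mul_self _
  -- key algebraic identity: P A P = M - (1 - P)
  have hPAP : P * A * P = M - (1 - P) := by
    rw [hAdef, hMdef, Matrix.mul_add, Matrix.mul_one, Matrix.add_mul, hPidem]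
    abel
  have pair : ∀ (C : Matrix (Fin n) (Fin n) ℝ) (v w : Fin n → ℝ),
      v ⬝ᵥ (C *ᵥ w) = (Cᵀ *ᵥ v) ⬝ᵥ w := fun C v w => by
    rw [Matrix.dotProduct_mulVec, Matrix.mulVec_transpose]
  -- M is positive definite
  have hM_pd : M.PosDef := by
    refine Matrix.posDef_iff_dotProduct_mulVec.mpr ⟨by rw [Matrix.IsHermitian, hct, hMt], fun x hx => ?_⟩
    have hdecomp : x ⬝ᵥ (M *ᵥ x)
        = ((1 - P) *ᵥ x) ⬝ᵥ ((1 - P) *ᵥ x) + (P *ᵥ x) ⬝ᵥ (A *ᵥ (P *ᵥ x)) := by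
      have hM' : M = (1 - P) + P * A * P := by rw [hPAP]; abel
      rw [hM', Matrix.add_mulVec, dotProduct_add]
      congr 1
      · conv_lhs => rw [show (1 : Matrix (Fin n) (Fin n) ℝ) - P = (1 - P) * (1 - P) from
          h1Pidem.symm]
        rw [← Matrix.mulVec_mulVec, pair, h1Pt]
      · rw [show P * A * P = P * (A * P) from Matrix.mul_assoc _ _ _,
          ← Matrix.mulVec_mulVec, pair, hPt, ← Matrix.mulVec_mulVec]
    simp only [star_trivial]
    rw [hdecomp]
    by_cases hPx : P *ᵥ x = 0
    · have hx1 : (1 - P) *ᵥ x = x := by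
        rw [Matrix.sub_mulVec, Matrix.one_mulVec, hPx, sub_zero]
      rw [hPx, hx1]
      simp only [Matrix.mulVec_zero, dotProduct_zero, add_zero]
      have h0 : x ⬝ᵥ x ≠ 0 := fun h => hx (dotProduct_self_eq_zero.mp h)
      have h1 : 0 ≤ x ⬝ᵥ x := by simpa using dotProduct_self_star_nonneg x
      exact lt_of_le_of_ne h1 (Ne.symm h0)
    · have h1 : 0 ≤ ((1 - P) *ᵥ x) ⬝ᵥ ((1 - P) *ᵥ x) := by
        simpa using dotProduct_self_star_nonneg ((1 - P) *ᵥ x)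
      have h2 : 0 < (P *ᵥ x) ⬝ᵥ (A *ᵥ (P *ᵥ x)) := by
        simpa using hpd.dotProduct_mulVec_pos hPx
      linarith
  -- invertibility facts
  have hAdet : IsUnit A.det := hpd.det_pos.ne'.isUnit
  have hMdet : IsUnit M.det := hM_pd.det_pos.ne'.isUnit
  have hAA : A * A⁻¹ = 1 := Matrix.mul_nonsing_inv _ hAdet
  have hA'A : A⁻¹ * A = 1 := Matrix.nonsing_inv_mul _ hAdet
  have hMM : M * M⁻¹ = 1 := Matrix.mul_nonsing_inv _ hMdet
  have hM'M : M⁻¹ * M = 1 := Matrix.nonsing_inv_mul _ hMdet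
  have hMinvT : M⁻¹ᵀ = M⁻¹ := by rw [Matrix.transpose_nonsing_inv, hMt]
  have hAinvT : A⁻¹ᵀ = A⁻¹ := by rw [Matrix.transpose_nonsing_inv, hAt]
  set Q : Matrix (Fin n) (Fin n) ℝ := P * M⁻¹ * P with hQdef
  set S : Matrix (Fin n) (Fin n) ℝ := A⁻¹ - Q with hSdef
  set Z : Matrix (Fin n) (Fin n) ℝ := M⁻¹ * P with hZdef
  have hSt : Sᵀ = S := by
    rw [hSdef, transpose_sub, hAinvT, hQdef, transpose_mul, transpose_mul, hPt, hMinvT,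
      Matrix.mul_assoc]
  have hZt : Zᵀ = P * M⁻¹ := by rw [hZdef, transpose_mul, hPt, hMinvT]
  -- Q A Q = Q - Zᵀ (1-P) Z
  have hQAQ : Q * A * Q = Q - Zᵀ * (1 - P) * Z := by
    have e1 : Q * A * Q = P * M⁻¹ * (P * A * P) * (M⁻¹ * P) := by
      rw [hQdef]; simp only [Matrix.mul_assoc]
    rw [e1, hPAP, Matrix.mul_sub, Matrix.sub_mul, hZt, hZdef]
    have e2 : P * M⁻¹ * M = P := by rw [Matrix.mul_assoc, hM'M, Matrix.mul_one]
    rw [e2, hQdef]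
    simp only [Matrix.mul_assoc]
  -- S A S = S - Q + Q A Q
  have hSAS : S * A * S = S - Q + Q * A * Q := by
    rw [hSdef, Matrix.sub_mul, Matrix.sub_mul, hA'A, Matrix.one_mul, Matrix.mul_sub]
    have e3 : Q * A * A⁻¹ = Q := by rw [Matrix.mul_assoc, hAA, Matrix.mul_one]
    rw [e3]
    abel
  -- the decomposition
  have hkey : S = Sᵀ * A * S + Zᵀ * (1 - P) * Z := by
    rw [hSt, hSAS, hQAQ]; abel
  have hkey2 : S = Sᴴ * A * S + Zᴴ * (1 - P) * Z := by
    rw [hct, hct]; exact hkey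
  rw [hkey2]
  exact (hpd.posSemidef.conjTranspose_mul_mul_same S).add
    (h1P_psd.conjTranspose_mul_mul_same Z)
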